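/- arXiv:1409.0951 — 3 statements merged into one kernel-verified Lean document; each statement's English description precedes it below -/
import Mathlib

section
/- For every lattice L ⊂ ℂ and every z with 0 < |z| < min{|u| : u ∈ L, u ≠ 0}, the Weierstrass ℘-function has the Laurent expansion ℘_L(z) = 1/z² + Σ_{n=1}^∞ (2n+1) E_{2n+2}(L) z^{2n}, the series converging absolutely. -/
noncomputable section

/-- The set of points of the lattice `ℤω₁ + ℤω₂` in `ℂ`. -/
def latticePts (ω₁ ω₂ : ℂ) : Set ℂ := {z | ∃ m n : ℤ, z = m * ω₁ + n * ω₂}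

/-- The Weierstrass ℘-function of the lattice `ℤω₁ + ℤω₂`. -/
def wp (ω₁ ω₂ : ℂ) (z : ℂ) : ℂ :=
  1 / z ^ 2 + ∑' u : {u : ℂ // u ∈ latticePts ω₁ ω₂ ∧ u ≠ 0},
    (1 / (z - (u : ℂ)) ^ 2 - 1 / (u : ℂ) ^ 2)

/-- The Eisenstein series `E_{2k}(L) = Σ_{u ∈ L \ {0}} u^{-2k}` of the lattice
`ℤω₁ + ℤω₂`. -/
def eisen (ω₁ ω₂ : ℂ) (k : ℕ) : ℂ :=
  ∑' u : {u : ℂ // u ∈ latticePts ω₁ ω₂ ∧ u ≠ 0}, 1 / (u : ℂ) ^ (2 * k)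


lemma norm_int_pi (v : Fin 2 → ℤ) : ‖v‖ = ‖(fun i => (v i : ℝ))‖ := by
  simp only [Pi.norm_def]; congr 1

variable (ω₁ ω₂ : ℂ)

lemma coords (u : ℂ) (hu : u ∈ latticePts ω₁ ω₂) :
    ∃ v : Fin 2 → ℤ, u = (v 0 : ℂ) * ω₁ + (v 1 : ℂ) * ω₂ := by
  obtain ⟨m, n, h⟩ := hu; exact ⟨![m, n], by simpa using h⟩

/-- coordinate map -/
def iota (u : {u : ℂ // u ∈ latticePts ω₁ ω₂ ∧ u ≠ 0}) : Fin 2 → ℤ :=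
  (coords ω₁ ω₂ u u.2.1).choose

lemma iota_spec (u : {u : ℂ // u ∈ latticePts ω₁ ω₂ ∧ u ≠ 0}) :
    (u : ℂ) = (iota ω₁ ω₂ u 0 : ℂ) * ω₁ + (iota ω₁ ω₂ u 1 : ℂ) * ω₂ :=
  (coords ω₁ ω₂ u u.2.1).choose_spec

lemma iota_inj : Function.Injective (iota ω₁ ω₂) := by
  intro u u' h
  apply Subtype.ext
  rw [iota_spec ω₁ ω₂ u, iota_spec ω₁ ω₂ u', h]

lemma iota_ne_zero (u : {u : ℂ // u ∈ latticePts ω₁ ω₂ ∧ u ≠ 0}) : iota ω₁ ω₂ u ≠ 0 := by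
  intro h
  apply u.2.2
  rw [iota_spec ω₁ ω₂ u, h]
  simp

lemma one_le_norm_iota (u : {u : ℂ // u ∈ latticePts ω₁ ω₂ ∧ u ≠ 0}) :
    (1 : ℝ) ≤ ‖iota ω₁ ω₂ u‖ := by
  obtain ⟨i, hi⟩ := Function.ne_iff.mp (iota_ne_zero ω₁ ω₂ u)
  calc (1 : ℝ) ≤ ‖iota ω₁ ω₂ u i‖ := by
        rw [Int.norm_eq_abs]
        exact_mod_cast Int.one_le_abs (by simpa using hi)
  _ ≤ ‖iota ω₁ ω₂ u‖ := norm_le_pi_norm _ i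

lemma exists_bound (hL : LinearIndependent ℝ ![ω₁, ω₂]) :
    ∃ C : ℝ, 0 < C ∧ ∀ u : {u : ℂ // u ∈ latticePts ω₁ ω₂ ∧ u ≠ 0},
      ‖iota ω₁ ω₂ u‖ ≤ C * ‖(u : ℂ)‖ := by
  have hcard : Fintype.card (Fin 2) = Module.finrank ℝ ℂ := by
    simp [Complex.finrank_real_complex]
  let b : Module.Basis (Fin 2) ℝ ℂ := basisOfLinearIndependentOfCardEqFinrank hL hcard
  let e : ℂ ≃L[ℝ] (Fin 2 → ℝ) := b.equivFunL
  refine ⟨max ‖(e : ℂ →L[ℝ] (Fin 2 → ℝ))‖ 1, lt_of_lt_of_le one_pos (le_max_right _ _),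
    fun u => ?_⟩
  have hb : ⇑b = ![ω₁, ω₂] := coe_basisOfLinearIndependentOfCardEqFinrank hL hcard
  set v : Fin 2 → ℤ := iota ω₁ ω₂ u with hv
  set w : Fin 2 → ℝ := fun i => (v i : ℝ) with hw
  have hx : (u : ℂ) = b.equivFun.symm w := by
    rw [iota_spec ω₁ ω₂ u, Module.Basis.equivFun_symm_apply, Fin.sum_univ_two, hb]
    simp only [Complex.real_smul, hw]
    push_cast
    rfl
  have h1 : e (b.equivFun.symm w) = w := b.equivFun.apply_symm_apply w
  have h2 : ‖w‖ ≤ ‖(e : ℂ →L[ℝ] (Fin 2 → ℝ))‖ * ‖b.equivFun.symm w‖ := by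
    calc ‖w‖ = ‖e (b.equivFun.symm w)‖ := by rw [h1]
    _ ≤ _ := (e : ℂ →L[ℝ] (Fin 2 → ℝ)).le_opNorm _
  rw [norm_int_pi, hx]
  refine h2.trans ?_
  exact mul_le_mul_of_nonneg_right (le_max_left _ _) (norm_nonneg _)

lemma summable_cube (hL : LinearIndependent ℝ ![ω₁, ω₂]) :
    Summable (fun u : {u : ℂ // u ∈ latticePts ω₁ ω₂ ∧ u ≠ 0} => 1 / ‖(u : ℂ)‖ ^ 3) := by
  obtain ⟨C, hC, hCb⟩ := exists_bound ω₁ ω₂ hL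
  have hs : Summable (fun v : Fin 2 → ℤ => ‖v‖ ^ (-(3:ℝ))) :=
    EisensteinSeries.summable_one_div_norm_rpow (by norm_num)
  have hs2 : Summable ((fun v : Fin 2 → ℤ => C ^ 3 * ‖v‖ ^ (-(3:ℝ))) ∘ iota ω₁ ω₂) :=
    ((hs.mul_left (C ^ 3)).comp_injective (iota_inj ω₁ ω₂))
  refine hs2.of_nonneg_of_le (fun u => by positivity) fun u => ?_
  have h1 : (1:ℝ) ≤ ‖iota ω₁ ω₂ u‖ := one_le_norm_iota ω₁ ω₂ u
  have hpos : (0:ℝ) < ‖iota ω₁ ω₂ u‖ := lt_of_lt_of_le one_pos h1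
  have hu : (0:ℝ) < ‖(u:ℂ)‖ := norm_pos_iff.mpr u.2.2
  have hrpow : ‖iota ω₁ ω₂ u‖ ^ (-(3:ℝ)) = (‖iota ω₁ ω₂ u‖ ^ (3:ℕ))⁻¹ := by
    rw [Real.rpow_neg (norm_nonneg _), ← Real.rpow_natCast]
    norm_num
  simp only [Function.comp_apply, hrpow]
  rw [one_div, ← div_eq_mul_inv, le_div_iff₀ (by positivity), inv_mul_le_iff₀ (by positivity)]
  calc ‖iota ω₁ ω₂ u‖ ^ (3:ℕ) ≤ (C * ‖(u:ℂ)‖) ^ (3:ℕ) :=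
        pow_le_pow_left₀ (norm_nonneg _) (hCb u) 3
  _ = ‖(u:ℂ)‖ ^ 3 * C ^ 3 := by ring

lemma finite_ball (hL : LinearIndependent ℝ ![ω₁, ω₂]) (R : ℝ) :
    {u : {u : ℂ // u ∈ latticePts ω₁ ω₂ ∧ u ≠ 0} | ‖(u : ℂ)‖ < R}.Finite := by
  obtain ⟨C, hC, hCb⟩ := exists_bound ω₁ ω₂ hL
  have hbox : {v : Fin 2 → ℤ | ‖v‖ ≤ C * R}.Finite := by
    refine Set.Finite.subset (Set.Finite.pi (t := fun _ : Fin 2 => Set.Icc (-⌈C * R⌉) ⌈C * R⌉)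
      (fun _ => Set.finite_Icc _ _)) ?_
    intro v hv
    simp only [Set.mem_pi, Set.mem_univ, Set.mem_Icc, forall_true_left]
    intro i
    have h1 : ‖v i‖ ≤ C * R := le_trans (norm_le_pi_norm v i) hv
    rw [Int.norm_eq_abs] at h1
    have h2 : (|v i| : ℝ) ≤ (⌈C * R⌉ : ℝ) := h1.trans (Int.le_ceil _)
    have h3 : |v i| ≤ ⌈C * R⌉ := by exact_mod_cast h2
    constructor
    · linarith [neg_abs_le (v i)]
    · linarith [le_abs_self (v i)]
  refine Set.Finite.of_finite_image (f := iota ω₁ ω₂) (Set.Finite.subset hbox ?_)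
    ((iota_inj ω₁ ω₂).injOn)
  rintro v ⟨u, hu, rfl⟩
  exact (hCb u).trans (mul_le_mul_of_nonneg_left (le_of_lt hu) hC.le)

lemma summable_np2_geo {t : ℝ} (h0 : 0 ≤ t) (h1 : t < 1) :
    Summable (fun n : ℕ => ((n : ℝ) + 2) * t ^ n) := by
  have ha : Summable (fun n : ℕ => (n : ℝ) * t ^ n) := by
    have := summable_pow_mul_geometric_of_norm_lt_one (R := ℝ) 1
      (r := t) (by rwa [Real.norm_eq_abs, abs_of_nonneg h0])
    simpa using this
  have hb : Summable (fun n : ℕ => t ^ n) := summable_geometric_of_lt_one h0 h1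
  exact (ha.add (hb.mul_left 2)).congr fun n => by ring

lemma key_summable (hL : LinearIndependent ℝ ![ω₁, ω₂]) (z : ℂ) (hz : 0 < ‖z‖)
    (hzu : ∀ u ∈ latticePts ω₁ ω₂, u ≠ 0 → ‖z‖ < ‖u‖) :
    Summable (fun p : {u : ℂ // u ∈ latticePts ω₁ ω₂ ∧ u ≠ 0} × ℕ =>
      ((p.2 : ℝ) + 2) * ‖z‖ ^ (p.2 + 1) / ‖(p.1 : ℂ)‖ ^ (p.2 + 3)) := by
  set F : {u : ℂ // u ∈ latticePts ω₁ ω₂ ∧ u ≠ 0} × ℕ → ℝ :=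
    fun p => ((p.2 : ℝ) + 2) * ‖z‖ ^ (p.2 + 1) / ‖(p.1 : ℂ)‖ ^ (p.2 + 3) with hF
  have hFnn : 0 ≤ F := fun p => by positivity
  have hnu : ∀ u : {u : ℂ // u ∈ latticePts ω₁ ω₂ ∧ u ≠ 0}, 0 < ‖(u : ℂ)‖ :=
    fun u => norm_pos_iff.mpr u.2.2
  have ht1 : ∀ u : {u : ℂ // u ∈ latticePts ω₁ ω₂ ∧ u ≠ 0}, ‖z‖ / ‖(u : ℂ)‖ < 1 :=
    fun u => (div_lt_one (hnu u)).mpr (hzu u u.2.1 u.2.2)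
  have hterm : ∀ (u : {u : ℂ // u ∈ latticePts ω₁ ω₂ ∧ u ≠ 0}) (n : ℕ),
      F (u, n) = (((n : ℝ) + 2) * (‖z‖ / ‖(u : ℂ)‖) ^ n) * (‖z‖ / ‖(u : ℂ)‖ ^ 3) := by
    intro u n
    have h0 : ‖(u : ℂ)‖ ≠ 0 := (hnu u).ne'
    rw [hF]
    simp only [div_pow]
    field_simp
    ring
  have hfib : ∀ u : {u : ℂ // u ∈ latticePts ω₁ ω₂ ∧ u ≠ 0},
      Summable (fun n : ℕ => F (u, n)) := by
    intro u
    refine Summable.congr ?_ fun n => (hterm u n).symm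
    exact (summable_np2_geo (by positivity) (ht1 u)).mul_right _
  rw [summable_prod_of_nonneg hFnn]
  refine ⟨hfib, ?_⟩
  -- outer sum
  set K : ℝ := ∑' n : ℕ, (((n : ℝ) + 2) * (1 / 2 : ℝ) ^ n) * ‖z‖ with hK
  have hKs : Summable (fun n : ℕ => (((n : ℝ) + 2) * (1 / 2 : ℝ) ^ n) * ‖z‖) :=
    (summable_np2_geo (by norm_num) (by norm_num)).mul_right _
  have houter_bound : ∀ u : {u : ℂ // u ∈ latticePts ω₁ ω₂ ∧ u ≠ 0},
      2 * ‖z‖ ≤ ‖(u : ℂ)‖ → (∑' n : ℕ, F (u, n)) ≤ K * (1 / ‖(u : ℂ)‖ ^ 3) := by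
    intro u hu2
    have h3 : ∀ n : ℕ, F (u, n) ≤ ((((n : ℝ) + 2) * (1 / 2 : ℝ) ^ n) * ‖z‖) * (1 / ‖(u : ℂ)‖ ^ 3) := by
      intro n
      rw [hterm u n]
      have htle : ‖z‖ / ‖(u : ℂ)‖ ≤ 1 / 2 := by
        rw [div_le_div_iff₀ (hnu u) (by norm_num)]
        linarith
      have h4 : (‖z‖ / ‖(u : ℂ)‖) ^ n ≤ (1 / 2 : ℝ) ^ n :=
        pow_le_pow_left₀ (by positivity) htle n
      calc (((n : ℝ) + 2) * (‖z‖ / ‖(u : ℂ)‖) ^ n) * (‖z‖ / ‖(u : ℂ)‖ ^ 3)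
          ≤ (((n : ℝ) + 2) * (1 / 2 : ℝ) ^ n) * (‖z‖ / ‖(u : ℂ)‖ ^ 3) := by
            apply mul_le_mul_of_nonneg_right _ (by positivity)
            exact mul_le_mul_of_nonneg_left h4 (by positivity)
      _ = ((((n : ℝ) + 2) * (1 / 2 : ℝ) ^ n) * ‖z‖) * (1 / ‖(u : ℂ)‖ ^ 3) := by ring
    calc (∑' n : ℕ, F (u, n))
        ≤ ∑' n : ℕ, ((((n : ℝ) + 2) * (1 / 2 : ℝ) ^ n) * ‖z‖) * (1 / ‖(u : ℂ)‖ ^ 3) :=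
          Summable.tsum_le_tsum h3 (hfib u) (hKs.mul_right _)
    _ = K * (1 / ‖(u : ℂ)‖ ^ 3) := by rw [hK, ← Summable.tsum_mul_right _ hKs]
  have hbad : {u : {u : ℂ // u ∈ latticePts ω₁ ω₂ ∧ u ≠ 0} | ‖(u : ℂ)‖ < 2 * ‖z‖}.Finite :=
    finite_ball ω₁ ω₂ hL (2 * ‖z‖)
  rw [← hbad.summable_compl_iff]
  refine Summable.of_nonneg_of_le (fun v => tsum_nonneg fun n => hFnn _) (fun v => ?_)
    (((summable_cube ω₁ ω₂ hL).mul_left K).subtype _)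
  exact houter_bound v.1 (not_lt.mp v.2)

lemma neg_mem {u : ℂ} (hu : u ∈ latticePts ω₁ ω₂) : -u ∈ latticePts ω₁ ω₂ := by
  obtain ⟨m, n, h⟩ := hu
  exact ⟨-m, -n, by push_cast; rw [h]; ring⟩

def negEquiv : {u : ℂ // u ∈ latticePts ω₁ ω₂ ∧ u ≠ 0} ≃
    {u : ℂ // u ∈ latticePts ω₁ ω₂ ∧ u ≠ 0} where
  toFun u := ⟨-u, neg_mem ω₁ ω₂ u.2.1, neg_ne_zero.mpr u.2.2⟩
  invFun u := ⟨-u, neg_mem ω₁ ω₂ u.2.1, neg_ne_zero.mpr u.2.2⟩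
  left_inv u := by ext; simp
  right_inv u := by ext; simp

lemma odd_tsum_zero {k : ℕ} (hk : Odd k) :
    ∑' u : {u : ℂ // u ∈ latticePts ω₁ ω₂ ∧ u ≠ 0}, 1 / (u : ℂ) ^ k = 0 := by
  have h := (negEquiv ω₁ ω₂).tsum_eq (f := fun u : {u : ℂ // u ∈ latticePts ω₁ ω₂ ∧ u ≠ 0} =>
    1 / (u : ℂ) ^ k)
  have h2 : ∀ u : {u : ℂ // u ∈ latticePts ω₁ ω₂ ∧ u ≠ 0},
      1 / ((negEquiv ω₁ ω₂ u : ℂ)) ^ k = -(1 / (u : ℂ) ^ k) := by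
    intro u
    have : ((negEquiv ω₁ ω₂ u : ℂ)) = -(u : ℂ) := rfl
    rw [this, hk.neg_pow, one_div, one_div, inv_neg]
  rw [funext fun u => (h2 u)] at h
  rw [tsum_neg] at h
  have h3 := neg_eq_iff_add_eq_zero.mp h
  exact add_self_eq_zero.mp h3
lemma fiber_hasSum {z u : ℂ} (hu : u ≠ 0) (h : ‖z‖ < ‖u‖) :
    HasSum (fun n : ℕ => ((n : ℂ) + 2) * z ^ (n + 1) / u ^ (n + 3))
      (1 / (z - u) ^ 2 - 1 / u ^ 2) := by
  have hupos : (0:ℝ) < ‖u‖ := norm_pos_iff.mpr hu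
  have hzu : z - u ≠ 0 := by
    intro hc
    rw [sub_eq_zero] at hc
    subst hc
    exact lt_irrefl _ h
  set w : ℂ := z / u with hwdef
  have hw : ‖w‖ < 1 := by
    rw [hwdef, norm_div]
    exact (div_lt_one hupos).mpr h
  have hw1 : (1:ℂ) - w ≠ 0 := by
    intro hc
    rw [sub_eq_zero] at hc
    apply absurd hw
    rw [← hc]
    simp
  have h1 : HasSum (fun n : ℕ => (n : ℂ) * w ^ n) (w / (1 - w) ^ 2) :=
    hasSum_coe_mul_geometric_of_norm_lt_one hw
  have h2 : HasSum (fun n : ℕ => w ^ n) ((1 - w)⁻¹) := hasSum_geometric_of_norm_lt_one hw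
  have h3 : HasSum (fun n : ℕ => ((n : ℂ) + 1) * w ^ n) (w / (1 - w) ^ 2 + (1 - w)⁻¹) := by
    have := h1.add h2
    refine this.congr_fun fun n => ?_
    ring
  have h4 : HasSum (fun n : ℕ => ((n : ℂ) + 2) * w ^ (n + 1))
      (w / (1 - w) ^ 2 + (1 - w)⁻¹ - 1) := by
    have h5 := (hasSum_nat_add_iff' (f := fun n => ((n : ℂ) + 1) * w ^ n) 1).mpr h3
    simp only [Finset.range_one, Finset.sum_singleton, Nat.cast_zero, zero_add, pow_zero,
      mul_one, Nat.cast_add, Nat.cast_one] at h5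
    refine h5.congr_fun fun n => ?_
    ring
  have h6 := h4.div_const (u ^ 2)
  have key : ∀ n : ℕ, ((n : ℂ) + 2) * w ^ (n + 1) / u ^ 2
      = ((n : ℂ) + 2) * z ^ (n + 1) / u ^ (n + 3) := by
    intro n
    have hpow : u ^ (n + 3) = u ^ (n + 1) * u ^ 2 := by ring
    rw [hwdef, div_pow, mul_div_assoc, mul_div_assoc, div_div, hpow]
  have hval : (w / (1 - w) ^ 2 + (1 - w)⁻¹ - 1) / u ^ 2 = 1 / (z - u) ^ 2 - 1 / u ^ 2 := by
    have huw : (1 - w) = (u - z) / u := by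
      rw [hwdef]
      field_simp
    have huz : u - z ≠ 0 := fun hc => hzu (by rw [← neg_sub] at hc; simpa using neg_eq_zero.mpr hc)
    rw [huw, hwdef]
    field_simp [hu, huz]
    ring
  rw [← hval]
  exact h6.congr_fun fun n => (key n).symm

lemma norm_term (z u : ℂ) (n : ℕ) :
    ‖((n : ℂ) + 2) * z ^ (n + 1) / u ^ (n + 3)‖
      = ((n : ℝ) + 2) * ‖z‖ ^ (n + 1) / ‖u‖ ^ (n + 3) := by
  rw [norm_div, norm_mul, norm_pow, norm_pow]
  congr 2
  have h : ((n : ℂ) + 2) = ((n + 2 : ℕ) : ℂ) := by push_cast; ring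
  rw [h, Complex.norm_natCast]
  push_cast
  ring

set_option maxHeartbeats 800000 in
/-- For every lattice `L ⊂ ℂ` and every `z` with `0 < ‖z‖ < min{‖u‖ : u ∈ L, u ≠ 0}`,
the Weierstrass ℘-function has the Laurent expansion
`℘_L(z) = 1/z² + Σ_{n=1}^∞ (2n+1) E_{2n+2}(L) z^{2n}`, converging absolutely. -/
theorem weierstrassP_laurent_expansion (ω₁ ω₂ : ℂ)
    (hL : LinearIndependent ℝ ![ω₁, ω₂]) (z : ℂ) (hz : 0 < ‖z‖)
    (hzu : ∀ u ∈ latticePts ω₁ ω₂, u ≠ 0 → ‖z‖ < ‖u‖) :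
    HasSum (fun n : ℕ =>
        (2 * ((n : ℂ) + 1) + 1) * eisen ω₁ ω₂ (n + 2) * z ^ (2 * (n + 1)))
      (wp ω₁ ω₂ z - 1 / z ^ 2) ∧
    Summable (fun n : ℕ =>
      ‖(2 * ((n : ℂ) + 1) + 1) * eisen ω₁ ω₂ (n + 2) * z ^ (2 * (n + 1))‖) := by
  classical
  have hz0 : z ≠ 0 := norm_pos_iff.mp hz
  set f : {u : ℂ // u ∈ latticePts ω₁ ω₂ ∧ u ≠ 0} × ℕ → ℂ :=
    fun p => ((p.2 : ℂ) + 2) * z ^ (p.2 + 1) / (p.1 : ℂ) ^ (p.2 + 3) with hf_def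
  set Sk : ℕ → ℂ := fun k => ∑' u : {u : ℂ // u ∈ latticePts ω₁ ω₂ ∧ u ≠ 0},
    1 / (u : ℂ) ^ k with hSk_def
  set A : ℕ → ℂ := fun n => ((n : ℂ) + 2) * z ^ (n + 1) with hA_def
  have hnorm : Summable (fun p => ‖f p‖) := by
    refine (key_summable ω₁ ω₂ hL z hz hzu).congr fun p => ?_
    exact (norm_term z p.1 p.2).symm
  obtain ⟨T, hT⟩ := hnorm.of_norm
  have hfib : ∀ u : {u : ℂ // u ∈ latticePts ω₁ ω₂ ∧ u ≠ 0},
      HasSum (fun n => f (u, n)) (1 / (z - (u : ℂ)) ^ 2 - 1 / (u : ℂ) ^ 2) :=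
    fun u => by
      have h := fiber_hasSum (z := z) (u := (u : ℂ)) u.2.2 (hzu u u.2.1 u.2.2)
      exact h
  have h1 : HasSum (fun u : {u : ℂ // u ∈ latticePts ω₁ ω₂ ∧ u ≠ 0} =>
      1 / (z - (u : ℂ)) ^ 2 - 1 / (u : ℂ) ^ 2) T := hT.prod_fiberwise hfib
  have hwp : wp ω₁ ω₂ z - 1 / z ^ 2 = T := by
    rw [wp, ← h1.tsum_eq]; ring
  have hswap : HasSum (fun p : ℕ × {u : ℂ // u ∈ latticePts ω₁ ω₂ ∧ u ≠ 0} =>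
      f p.swap) T := ((Equiv.prodComm ℕ _).hasSum_iff).mpr hT
  have hScol : ∀ n : ℕ, Summable (fun u : {u : ℂ // u ∈ latticePts ω₁ ω₂ ∧ u ≠ 0} =>
      f (u, n)) := fun n => hswap.summable.prod_factor n
  have hAne : ∀ n : ℕ, A n ≠ 0 := by
    intro n
    rw [hA_def]
    apply mul_ne_zero _ (pow_ne_zero _ hz0)
    have h : ((n : ℂ) + 2) = ((n + 2 : ℕ) : ℂ) := by push_cast; ring
    rw [h]
    exact Nat.cast_ne_zero.mpr (by omega)
  have hfAS : ∀ (u : {u : ℂ // u ∈ latticePts ω₁ ω₂ ∧ u ≠ 0}) (n : ℕ),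
      f (u, n) = A n * (1 / (u : ℂ) ^ (n + 3)) := by
    intro u n
    rw [hf_def, hA_def, mul_one_div]
  have hsum_inv : ∀ n : ℕ, Summable (fun u : {u : ℂ // u ∈ latticePts ω₁ ω₂ ∧ u ≠ 0} =>
      1 / (u : ℂ) ^ (n + 3)) := by
    intro n
    rw [← summable_mul_left_iff (hAne n)]
    exact (hScol n).congr fun u => hfAS u n
  have hcol : ∀ n : ℕ, HasSum (fun u : {u : ℂ // u ∈ latticePts ω₁ ω₂ ∧ u ≠ 0} =>
      f (u, n)) (A n * Sk (n + 3)) := by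
    intro n
    refine (((hsum_inv n).hasSum).mul_left (A n)).congr_fun fun u => ?_
    exact hfAS u n
  have h2 : HasSum (fun n : ℕ => A n * Sk (n + 3)) T := hswap.prod_fiberwise hcol
  have hginj : Function.Injective (fun m : ℕ => 2 * m + 1) := fun a b h => by
    dsimp at h; omega
  have hvan : ∀ n : ℕ, n ∉ Set.range (fun m : ℕ => 2 * m + 1) → A n * Sk (n + 3) = 0 := by
    intro n hn
    have heven : Even n := by
      rcases Nat.even_or_odd n with h | h
      · exact h
      · obtain ⟨m, hm⟩ := h
        exact absurd ⟨m, by dsimp; omega⟩ hn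
    obtain ⟨m, hm⟩ := heven
    have hodd3 : Odd (n + 3) := ⟨m + 1, by omega⟩
    simp only [hSk_def]
    rw [odd_tsum_zero ω₁ ω₂ hodd3, mul_zero]
  have hodd : HasSum ((fun n : ℕ => A n * Sk (n + 3)) ∘ (fun m : ℕ => 2 * m + 1)) T :=
    (hginj.hasSum_iff hvan).mpr h2
  have hteq : ∀ m : ℕ, (2 * ((m : ℂ) + 1) + 1) * eisen ω₁ ω₂ (m + 2) * z ^ (2 * (m + 1))
      = A (2 * m + 1) * Sk ((2 * m + 1) + 3) := by
    intro m
    have he : eisen ω₁ ω₂ (m + 2) = Sk ((2 * m + 1) + 3) := by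
      have hexp : 2 * (m + 2) = (2 * m + 1) + 3 := by omega
      rw [eisen, hexp]
    rw [he, hA_def]
    have hzp : z ^ (2 * (m + 1)) = z ^ ((2 * m + 1) + 1) := by congr 1
    rw [hzp]
    push_cast
    ring
  constructor
  · rw [hwp]
    refine hodd.congr_fun fun m => ?_
    exact hteq m
  · have hnormcol : ∀ n : ℕ, Summable
        (fun u : {u : ℂ // u ∈ latticePts ω₁ ω₂ ∧ u ≠ 0} => ‖f (u, n)‖) :=
      fun n => hnorm.prod_symm.prod_factor n
    have houter : Summable (fun n : ℕ => ∑' u : {u : ℂ // u ∈ latticePts ω₁ ω₂ ∧ u ≠ 0},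
        ‖f (u, n)‖) :=
      (hnorm.prod_symm.hasSum.prod_fiberwise fun n => (hnormcol n).hasSum).summable
    refine Summable.of_nonneg_of_le (fun m => norm_nonneg _) (fun m => ?_)
      (houter.comp_injective hginj)
    rw [hteq m, ← (hcol (2 * m + 1)).tsum_eq]
    exact norm_tsum_le_tsum_norm (hnormcol (2 * m + 1))
end
end

section
/- For every positive integer n, σ₇(n) = σ₃(n) + 120 Σ_{i=1}^{n−1} σ₃(i) σ₃(n−i). -/
/-- `sigmaFn k n = Σ_{d ∣ n} d^k`, the sum of the `k`-th powers of the positive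
divisors of `n`. -/
def sigmaFn (k n : ℕ) : ℕ := ∑ d ∈ n.divisors, d ^ k

namespace SigmaSeven

abbrev Q := ℕ × ℕ × ℕ × ℕ

/-- The set of quadruples `(a,b,x,y)` of positive integers with `a*x + b*y = n`. -/
def S (n : ℕ) : Finset Q :=
  (Finset.range (n+1) ×ˢ Finset.range (n+1) ×ˢ Finset.range (n+1) ×ˢ Finset.range (n+1)).filter
    (fun p => p.1 * p.2.2.1 + p.2.1 * p.2.2.2 = n ∧
      0 < p.1 ∧ 0 < p.2.1 ∧ 0 < p.2.2.1 ∧ 0 < p.2.2.2)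

lemma mem_S {n : ℕ} {p : Q} :
    p ∈ S n ↔ p.1 * p.2.2.1 + p.2.1 * p.2.2.2 = n ∧
      0 < p.1 ∧ 0 < p.2.1 ∧ 0 < p.2.2.1 ∧ 0 < p.2.2.2 := by
  obtain ⟨a, b, x, y⟩ := p
  simp only [S, Finset.mem_filter, Finset.mem_product, Finset.mem_range]
  constructor
  · tauto
  · rintro ⟨he, ha, hb, hx, hy⟩
    have h1 : a ≤ a * x := Nat.le_mul_of_pos_right _ hx
    have h2 : b ≤ b * y := Nat.le_mul_of_pos_right _ hy
    have h3 : x ≤ a * x := Nat.le_mul_of_pos_left _ ha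
    have h4 : y ≤ b * y := Nat.le_mul_of_pos_left _ hb
    refine ⟨⟨?_, ?_, ?_, ?_⟩, he, ha, hb, hx, hy⟩ <;> linarith

/-- the swap `(a,b,x,y) ↦ (b,a,y,x)` -/
def sw (p : Q) : Q := (p.2.1, p.1, p.2.2.2, p.2.2.1)

lemma sum_swap (P : Q → Prop) [DecidablePred P] (f : Q → ℤ) :
    ∑ p ∈ (S n).filter P, f p = ∑ p ∈ (S n).filter (fun p => P (sw p)), f (sw p) := by
  refine Finset.sum_nbij' sw sw ?_ ?_ ?_ ?_ ?_
  · rintro ⟨a, b, x, y⟩ hp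
    rw [Finset.mem_filter] at hp ⊢
    simp only [Finset.mem_filter, mem_S, sw] at hp ⊢
    refine ⟨⟨by linarith [hp.1.1], hp.1.2.2.1, hp.1.2.1, hp.1.2.2.2.2, hp.1.2.2.2.1⟩, hp.2⟩
  · rintro ⟨a, b, x, y⟩ hp
    rw [Finset.mem_filter] at hp ⊢
    simp only [Finset.mem_filter, mem_S, sw] at hp ⊢
    refine ⟨⟨by linarith [hp.1.1], hp.1.2.2.1, hp.1.2.1, hp.1.2.2.2.2, hp.1.2.2.2.1⟩, hp.2⟩
  · rintro ⟨a, b, x, y⟩ _; rfl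
  · rintro ⟨a, b, x, y⟩ _; rfl
  · rintro ⟨a, b, x, y⟩ _; rfl

/-- Key bijection: `(a,b,x,y) ↦ (a+b,b,x,y-x)` maps `{x<y}` to `{b<a}`. -/
lemma sum_alpha (f : Q → ℤ) :
    ∑ p ∈ (S n).filter (fun p => p.2.2.1 < p.2.2.2),
        f (p.1 + p.2.1, p.2.1, p.2.2.1, p.2.2.2 - p.2.2.1) =
      ∑ p ∈ (S n).filter (fun p => p.2.1 < p.1), f p := by
  refine Finset.sum_nbij' (fun p => (p.1 + p.2.1, p.2.1, p.2.2.1, p.2.2.2 - p.2.2.1))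
    (fun p => (p.1 - p.2.1, p.2.1, p.2.2.1, p.2.2.2 + p.2.2.1)) ?_ ?_ ?_ ?_ ?_
  · rintro ⟨a, b, x, y⟩ hp
    simp only [Finset.mem_filter, mem_S] at hp ⊢
    obtain ⟨⟨he, ha, hb, hx, hy⟩, hxy⟩ := hp
    obtain ⟨d, rfl⟩ : ∃ d, y = x + d := ⟨y - x, by omega⟩
    have hd : 0 < d := by omega
    constructor
    · refine ⟨?_, by omega, hb, hx, by omega⟩
      have : (a + b) * x + b * (x + d - x) = a * x + b * (x + d) := by
        simp only [Nat.add_sub_cancel_left]; ring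
      omega
    · omega
  · rintro ⟨a, b, x, y⟩ hp
    simp only [Finset.mem_filter, mem_S] at hp ⊢
    obtain ⟨⟨he, ha, hb, hx, hy⟩, hba⟩ := hp
    obtain ⟨c, rfl⟩ : ∃ c, a = b + c := ⟨a - b, by omega⟩
    have hc : 0 < c := by omega
    constructor
    · refine ⟨?_, by omega, hb, hx, by omega⟩
      have : (b + c - b) * x + b * (y + x) = (b + c) * x + b * y := by
        simp only [Nat.add_sub_cancel_left]; ring
      omega
    · omega
  · rintro ⟨a, b, x, y⟩ hp
    simp only [Finset.mem_filter, mem_S] at hp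
    show ((a + b) - b, b, x, (y - x) + x) = (a, b, x, y)
    simp only [Prod.mk.injEq, and_true, true_and]
    omega
  · rintro ⟨a, b, x, y⟩ hp
    simp only [Finset.mem_filter, mem_S] at hp
    show ((a - b) + b, b, x, (y + x) - x) = (a, b, x, y)
    simp only [Prod.mk.injEq, and_true, true_and]
    omega
  · rintro ⟨a, b, x, y⟩ _; rfl

/-- Trichotomy partitions for sums over `S n`. -/
lemma sum_trichotomy (c : Q → ℕ) (d : Q → ℕ) (f : Q → ℤ) :
    ∑ p ∈ S n, f p =
      ∑ p ∈ (S n).filter (fun p => c p < d p), f p +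
      ∑ p ∈ (S n).filter (fun p => c p = d p), f p +
      ∑ p ∈ (S n).filter (fun p => d p < c p), f p := by
  classical
  have h1 : ((S n).filter (fun p => ¬ c p < d p)).filter (fun p => c p = d p)
      = (S n).filter (fun p => c p = d p) := by
    rw [Finset.filter_filter]
    apply Finset.filter_congr
    intro p _
    constructor
    · exact fun h => h.2
    · intro h; omega
  have h2 : ((S n).filter (fun p => ¬ c p < d p)).filter (fun p => ¬ c p = d p)
      = (S n).filter (fun p => d p < c p) := by
    rw [Finset.filter_filter]
    apply Finset.filter_congr
    intro p _
    constructor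
    · intro h; omega
    · intro h; omega
  rw [← Finset.sum_filter_add_sum_filter_not (S n) (fun p => c p < d p) f,
    ← Finset.sum_filter_add_sum_filter_not ((S n).filter (fun p => ¬ c p < d p))
      (fun p => c p = d p) f, h1, h2, add_assoc]



/-- the three weight functions -/
def HH (p : Q) : ℤ := (p.1:ℤ)^2 * (p.2.1:ℤ)^2 * ((p.1:ℤ) - (p.2.1:ℤ))^2
def GG (p : Q) : ℤ := (p.1:ℤ)^3 * (p.2.1:ℤ)^3
def BB (p : Q) : ℤ := (p.1:ℤ)^2 * (p.2.1:ℤ)^2 * ((p.1:ℤ) + (p.2.1:ℤ))^2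

lemma s2 (e : ℕ) : 6 * ∑ a ∈ Finset.range e, (a:ℤ)^2 = 2*(e:ℤ)^3 - 3*(e:ℤ)^2 + e := by
  induction e with
  | zero => simp
  | succ m ih =>
    rw [Finset.sum_range_succ]
    push_cast
    push_cast at ih
    ring_nf
    ring_nf at ih
    linarith

lemma s3 (e : ℕ) : 4 * ∑ a ∈ Finset.range e, (a:ℤ)^3 = (e:ℤ)^4 - 2*(e:ℤ)^3 + (e:ℤ)^2 := by
  induction e with
  | zero => simp
  | succ m ih =>
    rw [Finset.sum_range_succ]
    push_cast
    push_cast at ih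
    ring_nf
    ring_nf at ih
    linarith

lemma s4 (e : ℕ) :
    30 * ∑ a ∈ Finset.range e, (a:ℤ)^4 = 6*(e:ℤ)^5 - 15*(e:ℤ)^4 + 10*(e:ℤ)^3 - e := by
  induction e with
  | zero => simp
  | succ m ih =>
    rw [Finset.sum_range_succ]
    push_cast
    push_cast at ih
    ring_nf
    ring_nf at ih
    linarith

lemma faulhaber (e : ℕ) :
    30 * ∑ a ∈ Finset.Ico 1 e, (a:ℤ)^2 * ((e:ℤ) - a)^2 = (e:ℤ)^5 - e := by
  have hsub : ∑ a ∈ Finset.Ico 1 e, (a:ℤ)^2 * ((e:ℤ) - a)^2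
      = ∑ a ∈ Finset.range e, (a:ℤ)^2 * ((e:ℤ) - a)^2 := by
    apply Finset.sum_subset
    · intro a ha
      simp only [Finset.mem_Ico] at ha
      simp only [Finset.mem_range]
      omega
    · intro a ha hna
      simp only [Finset.mem_Ico] at hna
      simp only [Finset.mem_range] at ha
      have : a = 0 := by omega
      subst this
      ring
  have hexp : ∑ a ∈ Finset.range e, (a:ℤ)^2 * ((e:ℤ) - a)^2
      = (e:ℤ)^2 * (∑ a ∈ Finset.range e, (a:ℤ)^2)
        - 2*(e:ℤ) * (∑ a ∈ Finset.range e, (a:ℤ)^3)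
        + ∑ a ∈ Finset.range e, (a:ℤ)^4 := by
    rw [Finset.mul_sum, Finset.mul_sum, ← Finset.sum_sub_distrib, ← Finset.sum_add_distrib]
    exact Finset.sum_congr rfl fun a _ => by ring
  rw [hsub, hexp]
  have h2 := s2 e
  have h3 := s3 e
  have h4 := s4 e
  linear_combination 5*(e:ℤ)^2*h2 - 15*(e:ℤ)*h3 + h4

/-- The boundary sum over `x = y` as a sum over divisor pairs. -/
lemma boundary (n : ℕ) (hn : 0 < n) :
    ∑ p ∈ (S n).filter (fun p => p.2.2.1 = p.2.2.2), BB p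
      = ∑ q ∈ n.divisorsAntidiagonal, (q.2:ℤ)^2 *
          ∑ a ∈ Finset.Ico 1 q.2, (a:ℤ)^2 * ((q.2:ℤ) - a)^2 := by
  have hrhs : ∑ q ∈ n.divisorsAntidiagonal, (q.2:ℤ)^2 *
          ∑ a ∈ Finset.Ico 1 q.2, (a:ℤ)^2 * ((q.2:ℤ) - a)^2
      = ∑ z ∈ n.divisorsAntidiagonal.sigma (fun q => Finset.Ico 1 q.2),
          (z.1.2:ℤ)^2 * ((z.2:ℤ)^2 * ((z.1.2:ℤ) - z.2)^2) := by
    refine Eq.trans (Finset.sum_congr rfl fun q _ => Finset.mul_sum _ _ _) ?_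
    exact Finset.sum_sigma' n.divisorsAntidiagonal (fun q => Finset.Ico 1 q.2)
      (fun q a => (q.2:ℤ)^2 * ((a:ℤ)^2 * ((q.2:ℤ) - a)^2))
  rw [hrhs]
  refine Finset.sum_nbij' (fun p => ⟨(p.2.2.1, p.1 + p.2.1), p.1⟩)
    (fun z => (z.2, z.1.2 - z.2, z.1.1, z.1.1)) ?_ ?_ ?_ ?_ ?_
  · rintro ⟨a, b, x, y⟩ hp
    simp only [Finset.mem_filter, mem_S] at hp
    obtain ⟨⟨he, ha, hb, hx, hy⟩, hxy⟩ := hp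
    subst hxy
    simp only [Finset.mem_sigma, Nat.mem_divisorsAntidiagonal, Finset.mem_Ico]
    have hmul : x * (a + b) = a * x + b * x := by ring
    refine ⟨⟨by omega, by omega⟩, by omega, by omega⟩
  · rintro ⟨⟨x, e⟩, a⟩ hz
    simp only [Finset.mem_sigma, Nat.mem_divisorsAntidiagonal, Finset.mem_Ico] at hz
    obtain ⟨⟨hxe, hne⟩, ha1, hae⟩ := hz
    simp only [Finset.mem_filter, mem_S]
    have hmul : a * x + (e - a) * x = (a + (e - a)) * x := by ring
    have hea : a + (e - a) = e := by omega
    have hex : e * x = x * e := by ring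
    refine ⟨⟨by rw [hmul, hea, hex]; exact hxe, by omega, by omega, ?_, ?_⟩, trivial⟩ <;>
      · have : 0 < x := by
          rcases Nat.eq_zero_or_pos x with rfl | h
          · simp at hxe; omega
          · exact h
        omega
  · rintro ⟨a, b, x, y⟩ hp
    simp only [Finset.mem_filter, mem_S] at hp
    show ((a : ℕ), (a + b) - a, x, x) = (a, b, x, y)
    simp only [Prod.mk.injEq, true_and, and_true]
    omega
  · rintro ⟨⟨x, e⟩, a⟩ hz
    simp only [Finset.mem_sigma, Nat.mem_divisorsAntidiagonal, Finset.mem_Ico] at hz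
    show (⟨(x, a + (e - a)), a⟩ : Σ _ : ℕ × ℕ, ℕ) = ⟨(x, e), a⟩
    have : a + (e - a) = e := by omega
    rw [this]
  · rintro ⟨a, b, x, y⟩ hp
    simp only [BB]
    push_cast
    ring

/-- The boundary sum evaluates to `σ₇(n) − σ₃(n)` (up to the factor 30). -/
lemma boundary30 (n : ℕ) (hn : 0 < n) :
    30 * ∑ p ∈ (S n).filter (fun p => p.2.2.1 = p.2.2.2), BB p
      = (sigmaFn 7 n : ℤ) - (sigmaFn 3 n : ℤ) := by
  rw [boundary n hn, Finset.mul_sum]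
  have hstep : ∀ q ∈ n.divisorsAntidiagonal,
      30 * ((q.2:ℤ)^2 * ∑ a ∈ Finset.Ico 1 q.2, (a:ℤ)^2 * ((q.2:ℤ) - a)^2)
        = (q.2:ℤ)^7 - (q.2:ℤ)^3 := by
    intro q _
    have := faulhaber q.2
    linear_combination (q.2:ℤ)^2 * this
  rw [Finset.sum_congr rfl hstep]
  have := Nat.sum_divisorsAntidiagonal' (fun _ e => (e:ℤ)^7 - (e:ℤ)^3) (n := n)
  rw [this, Finset.sum_sub_distrib]
  simp only [sigmaFn]
  push_cast
  ring

lemma mul_pos_facts {a b c : ℕ} (h : a * b = c) (hc : 0 < c) : 0 < a ∧ 0 < b := by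
  refine ⟨Nat.pos_of_ne_zero ?_, Nat.pos_of_ne_zero ?_⟩ <;> rintro rfl <;> simp at h <;> omega

/-- The convolution sum as a sum over `S n`. -/
lemma conv (n : ℕ) (hn : 0 < n) :
    ∑ i ∈ Finset.Ico 1 n, sigmaFn 3 i * sigmaFn 3 (n - i)
      = ∑ p ∈ S n, p.1 ^ 3 * p.2.1 ^ 3 := by
  have h1 : ∀ i ∈ Finset.Ico 1 n, sigmaFn 3 i * sigmaFn 3 (n - i)
      = ∑ q ∈ i.divisorsAntidiagonal ×ˢ (n - i).divisorsAntidiagonal,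
          q.1.1 ^ 3 * q.2.1 ^ 3 := by
    intro i _
    have e1 : sigmaFn 3 i = ∑ q ∈ i.divisorsAntidiagonal, q.1 ^ 3 := by
      rw [sigmaFn, ← Nat.sum_divisorsAntidiagonal (fun d e => d ^ 3)]
    have e2 : sigmaFn 3 (n - i) = ∑ q ∈ (n - i).divisorsAntidiagonal, q.1 ^ 3 := by
      rw [sigmaFn, ← Nat.sum_divisorsAntidiagonal (fun d e => d ^ 3)]
    rw [e1, e2, Finset.sum_mul_sum, ← Finset.sum_product']
  rw [Finset.sum_congr rfl h1]
  refine Eq.trans (Finset.sum_sigma' (Finset.Ico 1 n)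
    (fun i => i.divisorsAntidiagonal ×ˢ (n - i).divisorsAntidiagonal)
    (fun i q => q.1.1 ^ 3 * q.2.1 ^ 3)) ?_
  refine Finset.sum_nbij' (fun z => (z.2.1.1, z.2.2.1, z.2.1.2, z.2.2.2))
    (fun p => ⟨p.1 * p.2.2.1, ((p.1, p.2.2.1), (p.2.1, p.2.2.2))⟩) ?_ ?_ ?_ ?_ ?_
  · rintro ⟨i, ⟨⟨a, x⟩, ⟨b, y⟩⟩⟩ hz
    simp only [Finset.mem_sigma, Finset.mem_product, Nat.mem_divisorsAntidiagonal,
      Finset.mem_Ico] at hz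
    obtain ⟨⟨hi1, hi2⟩, ⟨hax, hax0⟩, ⟨hby, hby0⟩⟩ := hz
    simp only [mem_S]
    obtain ⟨ha, hx⟩ := mul_pos_facts hax (by omega)
    obtain ⟨hb, hy⟩ := mul_pos_facts hby (by omega)
    exact ⟨by omega, ha, hb, hx, hy⟩
  · rintro ⟨a, b, x, y⟩ hp
    simp only [mem_S] at hp
    obtain ⟨he, ha, hb, hx, hy⟩ := hp
    simp only [Finset.mem_sigma, Finset.mem_product, Nat.mem_divisorsAntidiagonal,
      Finset.mem_Ico]
    have hax : 0 < a * x := Nat.mul_pos ha hx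
    have hby : 0 < b * y := Nat.mul_pos hb hy
    exact ⟨⟨by omega, by omega⟩, ⟨trivial, by omega⟩, by omega, by omega⟩
  · rintro ⟨i, ⟨⟨a, x⟩, ⟨b, y⟩⟩⟩ hz
    simp only [Finset.mem_sigma, Finset.mem_product, Nat.mem_divisorsAntidiagonal,
      Finset.mem_Ico] at hz
    obtain ⟨_, ⟨hax, _⟩, _⟩ := hz
    subst hax
    rfl
  · rintro ⟨a, b, x, y⟩ _
    rfl
  · rintro ⟨i, ⟨⟨a, x⟩, ⟨b, y⟩⟩⟩ _
    rfl



end SigmaSeven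

open SigmaSeven in
/-- For every positive integer `n`,
`σ₇(n) = σ₃(n) + 120 Σ_{i=1}^{n−1} σ₃(i) σ₃(n−i)`. -/
theorem sigma_seven_eq (n : ℕ) (hn : 0 < n) :
    sigmaFn 7 n = sigmaFn 3 n + 120 * ∑ i ∈ Finset.Ico 1 n, sigmaFn 3 i * sigmaFn 3 (n - i) := by
  -- trichotomy for HH in the (x,y) variables
  have e1 : ∑ p ∈ S n, HH p
      = ∑ p ∈ (S n).filter (fun p => p.2.2.1 < p.2.2.2), HH p
        + ∑ p ∈ (S n).filter (fun p => p.2.2.1 = p.2.2.2), HH p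
        + ∑ p ∈ (S n).filter (fun p => p.2.2.2 < p.2.2.1), HH p :=
    sum_trichotomy (fun p => p.2.2.1) (fun p => p.2.2.2) HH
  -- swap symmetry for HH in (x,y)
  have e2 : ∑ p ∈ (S n).filter (fun p => p.2.2.2 < p.2.2.1), HH p
      = ∑ p ∈ (S n).filter (fun p => p.2.2.1 < p.2.2.2), HH p := by
    rw [sum_swap (fun p => p.2.2.2 < p.2.2.1) HH]
    refine Finset.sum_congr ?_ ?_
    · ext p; simp [sw, Finset.mem_filter]; exact Finset.mem_filter
    · intro p _; simp only [HH, sw]; ring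
  -- trichotomy for HH in the (a,b) variables
  have e3 : ∑ p ∈ S n, HH p
      = ∑ p ∈ (S n).filter (fun p => p.2.1 < p.1), HH p
        + ∑ p ∈ (S n).filter (fun p => p.2.1 = p.1), HH p
        + ∑ p ∈ (S n).filter (fun p => p.1 < p.2.1), HH p :=
    sum_trichotomy (fun p => p.2.1) (fun p => p.1) HH
  -- the diagonal a = b contributes zero to HH
  have e4 : ∑ p ∈ (S n).filter (fun p => p.2.1 = p.1), HH p = 0 := by
    refine Finset.sum_eq_zero fun p hp => ?_
    simp only [Finset.mem_filter] at hp
    simp [HH, hp.2]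
  -- swap symmetry for HH in (a,b)
  have e5 : ∑ p ∈ (S n).filter (fun p => p.1 < p.2.1), HH p
      = ∑ p ∈ (S n).filter (fun p => p.2.1 < p.1), HH p := by
    rw [sum_swap (fun p => p.1 < p.2.1) HH]
    refine Finset.sum_congr ?_ ?_
    · ext p; simp [sw, Finset.mem_filter]; exact Finset.mem_filter
    · intro p _; simp only [HH, sw]; ring
  -- the α-bijection
  have e6 : ∑ p ∈ (S n).filter (fun p => p.2.2.1 < p.2.2.2),
        HH (p.1 + p.2.1, p.2.1, p.2.2.1, p.2.2.2 - p.2.2.1)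
      = ∑ p ∈ (S n).filter (fun p => p.2.1 < p.1), HH p := sum_alpha HH
  -- pointwise: HH ∘ α = HH + 4·GG
  have e7 : ∑ p ∈ (S n).filter (fun p => p.2.2.1 < p.2.2.2),
        HH (p.1 + p.2.1, p.2.1, p.2.2.1, p.2.2.2 - p.2.2.1)
      = ∑ p ∈ (S n).filter (fun p => p.2.2.1 < p.2.2.2), HH p
        + 4 * ∑ p ∈ (S n).filter (fun p => p.2.2.1 < p.2.2.2), GG p := by
    rw [Finset.mul_sum, ← Finset.sum_add_distrib]
    refine Finset.sum_congr rfl fun p _ => ?_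
    simp only [HH, GG]
    push_cast
    ring
  -- trichotomy for GG in the (x,y) variables
  have e8 : ∑ p ∈ S n, GG p
      = ∑ p ∈ (S n).filter (fun p => p.2.2.1 < p.2.2.2), GG p
        + ∑ p ∈ (S n).filter (fun p => p.2.2.1 = p.2.2.2), GG p
        + ∑ p ∈ (S n).filter (fun p => p.2.2.2 < p.2.2.1), GG p :=
    sum_trichotomy (fun p => p.2.2.1) (fun p => p.2.2.2) GG
  -- swap symmetry for GG in (x,y)
  have e9 : ∑ p ∈ (S n).filter (fun p => p.2.2.2 < p.2.2.1), GG p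
      = ∑ p ∈ (S n).filter (fun p => p.2.2.1 < p.2.2.2), GG p := by
    rw [sum_swap (fun p => p.2.2.2 < p.2.2.1) GG]
    refine Finset.sum_congr ?_ ?_
    · ext p; simp [sw, Finset.mem_filter]; exact Finset.mem_filter
    · intro p _; simp only [GG, sw]; ring
  -- the boundary weight splits as HH + 4·GG
  have e10 : ∑ p ∈ (S n).filter (fun p => p.2.2.1 = p.2.2.2), BB p
      = ∑ p ∈ (S n).filter (fun p => p.2.2.1 = p.2.2.2), HH p
        + 4 * ∑ p ∈ (S n).filter (fun p => p.2.2.1 = p.2.2.2), GG p := by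
    rw [Finset.mul_sum, ← Finset.sum_add_distrib]
    refine Finset.sum_congr rfl fun p _ => ?_
    simp only [HH, GG, BB]
    ring
  -- boundary evaluation
  have e11 : 30 * ∑ p ∈ (S n).filter (fun p => p.2.2.1 = p.2.2.2), BB p
      = (sigmaFn 7 n : ℤ) - (sigmaFn 3 n : ℤ) := boundary30 n hn
  -- the convolution sum
  have e12 : ((∑ i ∈ Finset.Ico 1 n, sigmaFn 3 i * sigmaFn 3 (n - i) : ℕ) : ℤ)
      = ∑ p ∈ S n, GG p := by
    rw [conv n hn]
    push_cast
    exact Finset.sum_congr rfl fun p _ => by simp [GG]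
  have final : (sigmaFn 7 n : ℤ)
      = (sigmaFn 3 n : ℤ)
        + 120 * ((∑ i ∈ Finset.Ico 1 n, sigmaFn 3 i * sigmaFn 3 (n - i) : ℕ) : ℤ) := by
    rw [e12]
    linarith
  exact_mod_cast final
end

section
/- The Weierstrass curve Y² + XY = X³ + a₄(q) X + a₆(q) over the ring ℤ((q)) of formal Laurent series with integer coefficients is an elliptic curve, i.e. its discriminant q Π_{n≥1}(1−qⁿ)²⁴ is a unit of ℤ((q)). -/
noncomputable section

/-- `a₄(q) = −5 Σ_{n≥1} σ₃(n) qⁿ`, a power series with integer coefficients,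
regarded as an element of `ℤ((q))`. -/
def a4Tate : LaurentSeries ℤ :=
  HahnSeries.ofPowerSeries ℤ ℤ (PowerSeries.mk fun n => -5 * (sigmaFn 3 n : ℤ))

/-- `a₆(q) = −Σ_{n≥1} ((5σ₃(n) + 7σ₅(n))/12) qⁿ`, a power series with integer
coefficients (`12 ∣ 5σ₃(n) + 7σ₅(n)`), regarded as an element of `ℤ((q))`. -/
def a6Tate : LaurentSeries ℤ :=
  HahnSeries.ofPowerSeries ℤ ℤ
    (PowerSeries.mk fun n => -(((5 * sigmaFn 3 n + 7 * sigmaFn 5 n) / 12 : ℕ) : ℤ))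

/-- The Tate curve `Y² + XY = X³ + a₄(q)X + a₆(q)` as a Weierstrass curve over
the Laurent series ring `ℤ((q))`. -/
def tateCurve : WeierstrassCurve (LaurentSeries ℤ) :=
  { a₁ := 1, a₂ := 0, a₃ := 0, a₄ := a4Tate, a₆ := a6Tate }


/-- The Tate curve over ℤ[[X]]. -/
def tateCurvePS : WeierstrassCurve (PowerSeries ℤ) :=
  { a₁ := 1, a₂ := 0, a₃ := 0,
    a₄ := PowerSeries.mk fun n => -5 * (sigmaFn 3 n : ℤ),
    a₆ := PowerSeries.mk fun n => -(((5 * sigmaFn 3 n + 7 * sigmaFn 5 n) / 12 : ℕ) : ℤ) }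

lemma tateCurve_eq_map :
    tateCurve = tateCurvePS.map (HahnSeries.ofPowerSeries ℤ ℤ) := by
  simp [tateCurve, tateCurvePS, WeierstrassCurve.map, a4Tate, a6Tate]

open PowerSeries in
lemma tateCurvePS_Δ : ∃ Q : PowerSeries ℤ,
    tateCurvePS.Δ = X * Q ∧ constantCoeff Q = 1 := by
  have hA : (X : ℤ⟦X⟧) ∣ tateCurvePS.a₄ := by
    rw [X_dvd_iff]; simp [tateCurvePS, sigmaFn]
  have hB : (X : ℤ⟦X⟧) ∣ tateCurvePS.a₆ := by
    rw [X_dvd_iff]; simp [tateCurvePS, sigmaFn]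
  obtain ⟨A, hA⟩ := hA
  obtain ⟨B, hB⟩ := hB
  have hΔ : tateCurvePS.Δ = X * (-B + X * (A ^ 2 - 64 * X * A ^ 3 - 432 * B ^ 2
      + 72 * A * B)) := by
    simp only [WeierstrassCurve.Δ, WeierstrassCurve.b₂, WeierstrassCurve.b₄,
      WeierstrassCurve.b₆, WeierstrassCurve.b₈]
    rw [show tateCurvePS.a₁ = 1 from rfl, show tateCurvePS.a₂ = 0 from rfl,
      show tateCurvePS.a₃ = 0 from rfl, hA, hB]
    ring
  refine ⟨_, hΔ, ?_⟩
  have hB0 : constantCoeff B = -1 := by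
    have := congrArg (coeff 1) hB
    rw [show tateCurvePS.a₆ = mk fun n => -(((5 * sigmaFn 3 n + 7 * sigmaFn 5 n) / 12 : ℕ) : ℤ) from rfl, coeff_mk, mul_comm PowerSeries.X B, coeff_succ_mul_X] at this
    simp only [coeff_zero_eq_constantCoeff] at this
    have h1 : sigmaFn 3 1 = 1 := by decide
    have h5 : sigmaFn 5 1 = 1 := by decide
    rw [h1, h5] at this
    norm_num at this
    omega
  simp [hB0]

/-- The Tate curve over `ℤ((q))` is an elliptic curve: its discriminant
(namely `q Π_{n≥1}(1−qⁿ)²⁴`) is a unit of `ℤ((q))`. -/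
theorem tateCurve_isUnit_disc : IsUnit tateCurve.Δ := by
  obtain ⟨Q, hQ, hQ0⟩ := tateCurvePS_Δ
  rw [tateCurve_eq_map, WeierstrassCurve.map_Δ, hQ, map_mul]
  apply IsUnit.mul
  · rw [HahnSeries.ofPowerSeries_X]
    exact IsUnit.of_mul_eq_one (HahnSeries.single (-1 : ℤ) (1 : ℤ)) (by
      rw [HahnSeries.single_mul_single]; norm_num)
  · exact (PowerSeries.isUnit_iff_constantCoeff.mpr (by simp [hQ0])).map _
end
end
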